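/- arXiv:1312.7215 — 2 statements merged into one kernel-verified Lean document; each statement's English description precedes it below -/
import Mathlib

section
/- Let 𝒜 be an abelian ℚ-linear symmetric monoidal category whose tensor product is exact in each variable, and let 0 → F →f G → H → 0 be a short exact sequence in 𝒜. Then for all integers n ≥ 1 and i ≥ 0, the subobject ℱ^{i+1}_F(G^{⊗n}) ⊗ F of ℱ^i_F(G^{⊗n}) ⊗ G is the kernel of the morphism (ℱ^i_F(G^{⊗n}) ⊗ F) ⊕ (ℱ^{i+1}_F(G^{⊗n}) ⊗ G) → ℱ^i_F(G^{⊗n}) ⊗ G whose component on the first summand is id ⊗ f and whose component on the second summand is the negative of (inclusion) ⊗ id_G; equivalently, the commutative square with vertices ℱ^{i+1}_F(G^{⊗n}) ⊗ F, ℱ^i_F(G^{⊗n}) ⊗ F, ℱ^{i+1}_F(G^{⊗n}) ⊗ G and ℱ^i_F(G^{⊗n}) ⊗ G, formed by tensoring the inclusion ℱ^{i+1}_F(G^{⊗n}) ⊆ ℱ^i_F(G^{⊗n}) with f : F → G, is a pullback square. -/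
set_option linter.unusedSectionVars false

open CategoryTheory CategoryTheory.Limits CategoryTheory.MonoidalCategory

noncomputable section

universe v u

variable {C : Type u} [Category.{v} C] [Abelian C] [CategoryTheory.Linear ℚ C]
  [MonoidalCategory C] [SymmetricCategory C] [MonoidalPreadditive C]
  [MonoidalLinear ℚ C]
  [∀ X : C, PreservesFiniteLimits (tensorLeft X)]
  [∀ X : C, PreservesFiniteColimits (tensorLeft X)]
  [∀ X : C, PreservesFiniteLimits (tensorRight X)]
  [∀ X : C, PreservesFiniteColimits (tensorRight X)]

attribute [local instance] Abelian.hasFiniteBiproducts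

/-- The `n`-fold (left-associated) tensor power `M^{⊗n}`. -/
def tPow (M : C) : ℕ → C
  | 0 => 𝟙_ C
  | n + 1 => tPow M n ⊗ M

/-- The morphism `M^{⊗n} ⟶ M^{⊗n}` exchanging the tensor factors in positions
`i` and `i+1`, built from the braiding (symmetry) and the associators. -/
def adjSwap (M : C) : (n : ℕ) → ℕ → (tPow M n ⟶ tPow M n)
  | 0, _ => 𝟙 _
  | 1, _ => 𝟙 _
  | n + 2, i =>
    if i = n then
      (α_ (tPow M n) M M).hom ≫ (tPow M n ◁ (β_ M M).hom) ≫ (α_ (tPow M n) M M).inv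
    else
      adjSwap M (n + 1) i ⊗ₘ 𝟙 M

/-- Composite of a list of adjacent swaps. -/
def chainMor (M : C) (n : ℕ) (l : List ℕ) : tPow M n ⟶ tPow M n :=
  l.foldr (fun j g => adjSwap M n j ≫ g) (𝟙 _)

/-- `σ_M : M^{⊗n} ⟶ M^{⊗n}`, the canonical morphism permuting the `n` tensor
factors of `M^{⊗n}` (indexed bijectively by `σ ∈ Σ_n`). -/
def permMor (M : C) : (n : ℕ) → Equiv.Perm (Fin n) → (tPow M n ⟶ tPow M n)
  | 0, _ => 𝟙 _
  | n + 1, σ =>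
    ((permMor M n (Equiv.Perm.decomposeFin σ).2) ⊗ₘ 𝟙 M) ≫
      chainMor M (n + 1)
        (List.range' ((Equiv.Perm.decomposeFin σ).1 : ℕ)
          (n - ((Equiv.Perm.decomposeFin σ).1 : ℕ))).reverse

/-- The symmetrizer `s^n_M := (1/n!) ∑_{σ ∈ Σ_n} σ_M : M^{⊗n} ⟶ M^{⊗n}`. -/
def symmetrizer (M : C) (n : ℕ) : tPow M n ⟶ tPow M n :=
  (n.factorial : ℚ)⁻¹ • ∑ σ : Equiv.Perm (Fin n), permMor M n σ

/-- The `n`-th symmetric power `Sym^n(M)`, the image of the symmetrizer. -/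
def symObj (M : C) (n : ℕ) : C := image (symmetrizer M n)

/-- `f^{⊗n} : X^{⊗n} ⟶ Y^{⊗n}`. -/
def morPow {X Y : C} (f : X ⟶ Y) : (n : ℕ) → (tPow X n ⟶ tPow Y n)
  | 0 => 𝟙 _
  | n + 1 => morPow f n ⊗ₘ f

/-- The canonical isomorphism `M^{⊗a} ⊗ M^{⊗b} ≅ M^{⊗(a+b)}`. -/
def tPowMulIso (M : C) : (a b : ℕ) → ((tPow M a ⊗ tPow M b) ≅ tPow M (a + b))
  | _, 0 => ρ_ _
  | a, b + 1 => (α_ _ _ _).symm ≪≫ whiskerRightIso (tPowMulIso M a b) M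

/-- The morphism `f^{⊗i} ⊗ id_G^{⊗(n-i)} : F^{⊗i} ⊗ G^{⊗(n-i)} ⟶ G^{⊗n}`. -/
def symIncMor {F G : C} (f : F ⟶ G) (n i : ℕ) (h : i ≤ n) :
    (tPow F i ⊗ tPow G (n - i)) ⟶ tPow G n :=
  (morPow f i ⊗ₘ 𝟙 (tPow G (n - i))) ≫ (tPowMulIso G i (n - i)).hom ≫
    eqToHom (by rw [Nat.add_sub_cancel' h])

/-- `Sym^n_i(G)`: the image of `s^n_G ∘ (f^{⊗i} ⊗ id_G^{⊗(n-i)})` as a subobject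
of `G^{⊗n}` (and `0` for `i > n`). -/
def SymFilt {F G : C} (f : F ⟶ G) (n i : ℕ) : Subobject (tPow G n) :=
  if h : i ≤ n then imageSubobject (symIncMor f n i h ≫ symmetrizer G n) else ⊥

/-- Mixed tensor products: `C_{j_1} ⊗ ⋯ ⊗ C_{j_n}` where `C_true = A`,
`C_false = B`. -/
def mixPow (A B : C) : (n : ℕ) → (Fin n → Bool) → C
  | 0, _ => 𝟙_ C
  | n + 1, j => mixPow A B n (fun k => j k.castSucc) ⊗ (bif j (Fin.last n) then A else B)

/-- The component morphism: `f : F ⟶ G` in the `F`-slots, identity in the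
`G`-slots. -/
def boolMor {F G : C} (f : F ⟶ G) : (b : Bool) → ((bif b then F else G) ⟶ G)
  | true => f
  | false => 𝟙 G

/-- The canonical map `C_{j_1} ⊗ ⋯ ⊗ C_{j_n} ⟶ G^{⊗n}` (with `C_true = F`
mapping by `f` and `C_false = G` mapping by the identity). -/
def mixMor {F G : C} (f : F ⟶ G) : (n : ℕ) → (j : Fin n → Bool) → (mixPow F G n j ⟶ tPow G n)
  | 0, _ => 𝟙 _
  | n + 1, j => mixMor f n (fun k => j k.castSucc) ⊗ₘ boolMor f (j (Fin.last n))

/-- The weight of a tuple `j ∈ {0,1}^n`: the number of `F`-slots. -/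
def wt {n : ℕ} (j : Fin n → Bool) : ℕ := (Finset.univ.filter fun k => j k = true).card

/-- The filtration `ℱ^i_F(G^{⊗n})`: the subobject of `G^{⊗n}` generated by the
images of all the mixed tensor products of weight (at least) `i`. -/
def FFilt {F G : C} (f : F ⟶ G) (n i : ℕ) : Subobject (tPow G n) :=
  (Finset.univ.filter fun j : Fin n → Bool => i ≤ wt j).sup
    fun j => imageSubobject (mixMor f n j)

lemma FFilt_antitone {F G : C} (f : F ⟶ G) (n i : ℕ) :
    FFilt f n (i + 1) ≤ FFilt f n i := by
  unfold FFilt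
  refine Finset.sup_le fun j hj => ?_
  have hj' : j ∈ Finset.filter (fun j : Fin n → Bool => i ≤ wt j) Finset.univ := by
    simp only [Finset.mem_filter, Finset.mem_univ, true_and] at hj ⊢
    omega
  exact Finset.le_sup (f := fun j : Fin n → Bool => imageSubobject (mixMor f n j)) hj'

/-- The component inclusion `C_true = F ⟶ F ⊞ H`, `C_false = H ⟶ F ⊞ H`. -/
def boolIncl (F H : C) : (b : Bool) → ((bif b then F else H) ⟶ F ⊞ H)
  | true => biprod.inl
  | false => biprod.inr

/-- The canonical inclusion `C_{j_1} ⊗ ⋯ ⊗ C_{j_n} ⟶ (F ⊞ H)^{⊗n}`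
(with `C_true = F`, `C_false = H`, each factor included canonically). -/
def mixIncl (F H : C) : (n : ℕ) → (j : Fin n → Bool) → (mixPow F H n j ⟶ tPow (F ⊞ H) n)
  | 0, _ => 𝟙 _
  | n + 1, j => mixIncl F H n (fun k => j k.castSucc) ⊗ₘ boolIncl F H (j (Fin.last n))


lemma tensor_mono_isPullback {A B F G H : C} (a : A ⟶ B) [Mono a]
    (f : F ⟶ G) (g : G ⟶ H) (w : f ≫ g = 0)
    (hses : (ShortComplex.mk f g w).ShortExact) :
    IsPullback (a ⊗ₘ 𝟙 F) (𝟙 A ⊗ₘ f) (𝟙 B ⊗ₘ f) (a ⊗ₘ 𝟙 G) := by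
  have hmf : Mono f := hses.mono_f
  have mAf : Mono (𝟙 A ⊗ₘ f) := by
    rw [id_tensorHom]; exact preserves_mono_of_preservesLimit (tensorLeft A) f
  have mBf : Mono (𝟙 B ⊗ₘ f) := by
    rw [id_tensorHom]; exact preserves_mono_of_preservesLimit (tensorLeft B) f
  have mAH : Mono (a ⊗ₘ 𝟙 H) := by
    rw [tensorHom_id]; exact preserves_mono_of_preservesLimit (tensorRight H) a
  have comm : (a ⊗ₘ 𝟙 F) ≫ (𝟙 B ⊗ₘ f) = (𝟙 A ⊗ₘ f) ≫ (a ⊗ₘ 𝟙 G) := by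
    rw [tensorHom_comp_tensorHom, tensorHom_comp_tensorHom, Category.comp_id, Category.id_comp, Category.comp_id, Category.id_comp]
  have hker : IsLimit (KernelFork.ofι ((tensorLeft A).map f)
      (by simp only [← Functor.map_comp, w, Functor.map_zero]) :
        Fork ((tensorLeft A).map g) 0) :=
    isLimitForkMapOfIsLimit' (tensorLeft A) w hses.exact.fIsKernel
  have hz : ∀ s : PullbackCone (𝟙 B ⊗ₘ f) (a ⊗ₘ 𝟙 G),
      s.snd ≫ (tensorLeft A).map g = 0 := by
    intro s
    have h1 : (tensorLeft A).map g ≫ (a ⊗ₘ 𝟙 H) = (a ⊗ₘ 𝟙 G) ≫ B ◁ g := by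
      simp only [curriedTensor_obj_map, ← id_tensorHom, tensorHom_comp_tensorHom]
      simp
    refine (cancel_mono (a ⊗ₘ 𝟙 H)).1 ?_
    rw [Category.assoc, h1, ← Category.assoc, ← PullbackCone.condition s,
      Category.assoc, zero_comp, ← id_tensorHom, tensorHom_comp_tensorHom, w]
    simp
  set L : ∀ s : PullbackCone (𝟙 B ⊗ₘ f) (a ⊗ₘ 𝟙 G), s.pt ⟶ A ⊗ F :=
    fun s => (KernelFork.IsLimit.lift' hker s.snd (hz s)).1 with hLdef
  have hL : ∀ s, L s ≫ (𝟙 A ⊗ₘ f) = s.snd := fun s => by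
    simpa only [KernelFork.ι_ofι, curriedTensor_obj_map, ← id_tensorHom, hLdef] using
      (KernelFork.IsLimit.lift' hker s.snd (hz s)).2
  refine IsPullback.of_isLimit' ⟨comm⟩ ?_
  refine PullbackCone.IsLimit.mk _ L (fun s => ?_) (fun s => hL s) (fun s m hm1 hm2 => ?_)
  · apply (cancel_mono (𝟙 B ⊗ₘ f)).1
    rw [Category.assoc, comm, ← Category.assoc, hL s, ← PullbackCone.condition s]
  · apply (cancel_mono (𝟙 A ⊗ₘ f)).1
    rw [hm2, hL s]

/-- for a short exact sequence `0 → F → G → H → 0`, `n ≥ 1`,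
`i ≥ 0`, the square obtained by tensoring the inclusion
`ℱ^{i+1}_F(G^{⊗n}) ⊆ ℱ^i_F(G^{⊗n})` with `f : F ⟶ G` is a pullback square;
equivalently, `ℱ^{i+1}_F(G^{⊗n}) ⊗ F` is the kernel of the map
`(ℱ^i_F(G^{⊗n}) ⊗ F) ⊕ (ℱ^{i+1}_F(G^{⊗n}) ⊗ G) ⟶ ℱ^i_F(G^{⊗n}) ⊗ G`
with components `id ⊗ₘ f` and `-(inclusion ⊗ id_G)`. -/
theorem FFilt_tensor_isPullback (F G H : C) (f : F ⟶ G) (g : G ⟶ H)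
    (w : f ≫ g = 0) (hses : (ShortComplex.mk f g w).ShortExact)
    (n i : ℕ) (hn : 1 ≤ n) :
    IsPullback
      (Subobject.ofLE (FFilt f n (i + 1)) (FFilt f n i) (FFilt_antitone f n i) ⊗ₘ 𝟙 F)
      (𝟙 ((FFilt f n (i + 1) : C)) ⊗ₘ f)
      (𝟙 ((FFilt f n i : C)) ⊗ₘ f)
      (Subobject.ofLE (FFilt f n (i + 1)) (FFilt f n i) (FFilt_antitone f n i) ⊗ₘ 𝟙 G) :=
  tensor_mono_isPullback _ f g w hses

end
end

section
/- Let 𝒜 be an abelian ℚ-linear symmetric monoidal category whose tensor product is exact in each variable, and let 0 → F →f G → H → 0 be a short exact sequence in 𝒜. Then for all integers n ≥ 1 and i ≥ 1 there is a short exact sequence 0 → ℱ^{i+1}_F(G^{⊗n}) ⊗ F → (ℱ^i_F(G^{⊗n}) ⊗ F) ⊕ (ℱ^{i+1}_F(G^{⊗n}) ⊗ G) → ℱ^{i+1}_F(G^{⊗(n+1)}) → 0, where the first map has components (inclusion) ⊗ id_F and −(id ⊗ f), and the second map is induced, under the identification G^{⊗n} ⊗ G = G^{⊗(n+1)}, by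 id ⊗ f on the first summand and by (inclusion) ⊗ id_G on the second summand. -/
set_option linter.unusedSectionVars false

open CategoryTheory CategoryTheory.Limits CategoryTheory.MonoidalCategory

noncomputable section

universe v u

variable {C : Type u} [Category.{v} C] [Abelian C] [CategoryTheory.Linear ℚ C]
  [MonoidalCategory C] [SymmetricCategory C] [MonoidalPreadditive C]
  [MonoidalLinear ℚ C]
  [∀ X : C, PreservesFiniteLimits (tensorLeft X)]
  [∀ X : C, PreservesFiniteColimits (tensorLeft X)]
  [∀ X : C, PreservesFiniteLimits (tensorRight X)]
  [∀ X : C, PreservesFiniteColimits (tensorRight X)]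

attribute [local instance] Abelian.hasFiniteBiproducts

section AuxLemmas

lemma epi_whiskerRight_aux {X Y : C} (f : X ⟶ Y) [Epi f] (Q : C) : Epi (f ▷ Q) := by
  have h : (tensorRight Q).map f = f ▷ Q := rfl
  rw [← h]; infer_instance

lemma epi_whiskerLeft_aux {X Y : C} (f : X ⟶ Y) [Epi f] (Q : C) : Epi (Q ◁ f) := by
  have h : (tensorLeft Q).map f = Q ◁ f := rfl
  rw [← h]; infer_instance

lemma mono_whiskerRight_aux {X Y : C} (f : X ⟶ Y) [Mono f] (Q : C) : Mono (f ▷ Q) := by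
  have h : (tensorRight Q).map f = f ▷ Q := rfl
  rw [← h]; infer_instance

lemma mono_whiskerLeft_aux {X Y : C} (f : X ⟶ Y) [Mono f] (Q : C) : Mono (Q ◁ f) := by
  have h : (tensorLeft Q).map f = Q ◁ f := rfl
  rw [← h]; infer_instance

lemma mono_tensor_aux {X Y X' Y' : C} (f : X ⟶ Y) (g : X' ⟶ Y') [Mono f] [Mono g] :
    Mono (f ⊗ₘ g) := by
  rw [MonoidalCategory.tensorHom_def]
  haveI := mono_whiskerRight_aux f X'
  haveI := mono_whiskerLeft_aux g Y
  exact mono_comp _ _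

lemma imageSubobject_epi_comp_eq {P X Y : C} (e : P ⟶ X) [Epi e] (h : X ⟶ Y) :
    imageSubobject (e ≫ h) = imageSubobject h := by
  refine le_antisymm (imageSubobject_comp_le e h) ?_
  haveI : StrongEpi e := strongEpi_of_epi e
  have sq : CommSq (factorThruImageSubobject (e ≫ h)) e
      ((imageSubobject (e ≫ h)).arrow) h := ⟨by simp⟩
  exact imageSubobject_le h sq.lift (by simp)

lemma imageSubobject_biprod_desc {P R Z : C} (p : P ⟶ Z) (r : R ⟶ Z) :
    imageSubobject (biprod.desc p r) = imageSubobject p ⊔ imageSubobject r := by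
  refine le_antisymm ?_ (sup_le ?_ ?_)
  · refine imageSubobject_le _ (biprod.desc
      (factorThruImageSubobject p ≫ Subobject.ofLE _ _ (le_sup_left (b := imageSubobject r)))
      (factorThruImageSubobject r ≫ Subobject.ofLE _ _ (le_sup_right (a := imageSubobject p)))) ?_
    ext
    · simp [Subobject.ofLE_arrow]
    · simp [Subobject.ofLE_arrow]
  · simpa using imageSubobject_comp_le biprod.inl (biprod.desc p r)
  · simpa using imageSubobject_comp_le biprod.inr (biprod.desc p r)

lemma biprodComparison_tensor {X Y Q : C} :
    IsIso (biprod.lift (biprod.fst (X := X) (Y := Y) ▷ Q) (biprod.snd ▷ Q)) := by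
  refine ⟨biprod.desc (biprod.inl ▷ Q) (biprod.inr ▷ Q), ?_, ?_⟩
  · rw [biprod.lift_desc]
    simp only [← comp_whiskerRight, ← MonoidalPreadditive.add_whiskerRight, biprod.total]
    simp
  · ext <;> simp [← comp_whiskerRight, ← MonoidalPreadditive.add_whiskerRight]

lemma biprod_desc_eq_sum {P R Z : C} (p : P ⟶ Z) (r : R ⟶ Z) :
    biprod.desc p r = biprod.fst ≫ p + biprod.snd ≫ r := by
  ext <;> simp

lemma imageSubobject_sup_arrow_tensor_le {Z Q Q' : C} (X Y : Subobject Z) (q : Q ⟶ Q') :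
    imageSubobject ((X ⊔ Y).arrow ⊗ₘ q)
      ≤ imageSubobject (X.arrow ⊗ₘ q) ⊔ imageSubobject (Y.arrow ⊗ₘ q) := by
  have main : ∀ (XO YO : C) (x : XO ⟶ Z) (y : YO ⟶ Z) (xq : XO ⊗ Q ⟶ Z ⊗ Q')
      (yq : YO ⊗ Q ⟶ Z ⊗ Q') (hx : Mono x) (hy : Mono y)
      (hxq : xq = x ⊗ₘ q) (hyq : yq = y ⊗ₘ q)
      (hXx : X = Subobject.mk x) (hYy : Y = Subobject.mk y),
      imageSubobject ((X ⊔ Y).arrow ⊗ₘ q) ≤ imageSubobject xq ⊔ imageSubobject yq := by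
    intro XO YO x y xq yq hx hy hxq hyq hXx hYy
    set d := biprod.desc x y with hdd
    have hd : imageSubobject d = X ⊔ Y := by
      rw [hdd, imageSubobject_biprod_desc, imageSubobject_mono, imageSubobject_mono,
        hXx, hYy]
    have e1 : (X ⊔ Y).arrow ⊗ₘ q
        = ((Subobject.isoOfEq _ _ hd).inv ▷ Q) ≫ ((imageSubobject d).arrow ⊗ₘ q) := by
      rw [MonoidalCategory.tensorHom_def, MonoidalCategory.tensorHom_def, ← comp_whiskerRight_assoc, Subobject.isoOfEq_inv,
        Subobject.ofLE_arrow]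
    have e2 : (factorThruImageSubobject d ▷ Q) ≫ ((imageSubobject d).arrow ⊗ₘ q) = d ⊗ₘ q := by
      rw [MonoidalCategory.tensorHom_def, ← comp_whiskerRight_assoc, imageSubobject_arrow_comp, MonoidalCategory.tensorHom_def]
    have e3 : d ⊗ₘ q = biprod.lift (biprod.fst ▷ Q) (biprod.snd ▷ Q)
        ≫ biprod.desc xq yq := by
      rw [biprod.lift_desc, hxq, hyq, hdd, biprod_desc_eq_sum, MonoidalPreadditive.add_tensor]
      simp only [MonoidalCategory.tensorHom_def, comp_whiskerRight, Category.assoc]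
    haveI : IsIso (biprod.lift (biprod.fst (X := XO) (Y := YO) ▷ Q) (biprod.snd ▷ Q)) :=
      biprodComparison_tensor
    haveI := epi_whiskerRight_aux (factorThruImageSubobject d) Q
    refine le_of_eq ?_ |>.trans (le_of_eq (imageSubobject_biprod_desc _ _))
    calc imageSubobject ((X ⊔ Y).arrow ⊗ₘ q)
        = imageSubobject ((imageSubobject d).arrow ⊗ₘ q) := by rw [e1, imageSubobject_epi_comp_eq]
      _ = imageSubobject (d ⊗ₘ q) := by rw [← e2, imageSubobject_epi_comp_eq]
      _ = imageSubobject (biprod.desc xq yq) := by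
          rw [e3, imageSubobject_epi_comp_eq]
  exact main _ _ X.arrow Y.arrow _ _ inferInstance inferInstance rfl rfl
    (Subobject.mk_arrow X).symm (Subobject.mk_arrow Y).symm

lemma imageSubobject_image_arrow_tensor {XO Z Q Q' : C} (m : XO ⟶ Z) (q : Q ⟶ Q') :
    imageSubobject ((imageSubobject m).arrow ⊗ₘ q) = imageSubobject (m ⊗ₘ q) := by
  have e2 : (factorThruImageSubobject m ▷ Q) ≫ ((imageSubobject m).arrow ⊗ₘ q) = m ⊗ₘ q := by
    rw [MonoidalCategory.tensorHom_def, ← comp_whiskerRight_assoc, imageSubobject_arrow_comp, MonoidalCategory.tensorHom_def]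
  haveI := epi_whiskerRight_aux (factorThruImageSubobject m) Q
  rw [← e2, imageSubobject_epi_comp_eq]

lemma imageSubobject_finset_sup_arrow_tensor_le {ι : Type*} (s : Finset ι)
    {Z Q Q' : C} (O : ι → C) (m : ∀ j, O j ⟶ Z) (q : Q ⟶ Q') :
    imageSubobject ((s.sup fun j => imageSubobject (m j)).arrow ⊗ₘ q)
      ≤ s.sup fun j => imageSubobject (m j ⊗ₘ q) := by
  induction s using Finset.cons_induction with
  | empty =>
      simp only [Finset.sup_empty]
      have h0 : (⊥ : Subobject Z).arrow ⊗ₘ q = 0 := by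
        have hb := Subobject.bot_arrow (B := Z)
        rw [MonoidalCategory.tensorHom_def, hb]
        simp
      exact imageSubobject_le _ 0 (by rw [zero_comp]; exact h0.symm)
  | cons a s ha ih =>
      rw [Finset.sup_cons, Finset.sup_cons]
      exact (imageSubobject_sup_arrow_tensor_le _ _ q).trans
        (sup_le_sup (le_of_eq (imageSubobject_image_arrow_tensor _ _)) ih)

lemma wt_snoc {n : ℕ} (j : Fin n → Bool) (b : Bool) :
    wt (Fin.snoc j b) = wt j + (bif b then 1 else 0) := by
  unfold wt
  rw [Finset.card_filter, Finset.card_filter, Fin.sum_univ_castSucc]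
  simp only [Fin.snoc_castSucc, Fin.snoc_last]
  cases b <;> simp

lemma imageSubobject_mixMor_tensor_congr {F G : C} (f : F ⟶ G) {n : ℕ}
    {j j' : Fin n → Bool} {b b' : Bool} (h : j = j') (hb : b = b') :
    imageSubobject (mixMor f n j ⊗ₘ boolMor f b)
      = imageSubobject (mixMor f n j' ⊗ₘ boolMor f b') := by
  subst h; subst hb; rfl

lemma imageSubobject_mixMor_succ {F G : C} (f : F ⟶ G) {n : ℕ} (k : Fin (n + 1) → Bool) :
    imageSubobject (mixMor f (n + 1) k)
      = imageSubobject (mixMor f n (Fin.init k) ⊗ₘ boolMor f (k (Fin.last n))) := rfl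

lemma imageSubobject_mixMor_snoc {F G : C} (f : F ⟶ G) {n : ℕ} (j : Fin n → Bool) (b : Bool) :
    imageSubobject (mixMor f n j ⊗ₘ boolMor f b)
      = imageSubobject (mixMor f (n + 1) (Fin.snoc j b)) := by
  rw [imageSubobject_mixMor_succ f (Fin.snoc j b)]
  exact imageSubobject_mixMor_tensor_congr f (Fin.init_snoc (α := fun _ => Bool) b j).symm (Fin.snoc_last (α := fun _ => Bool) b j).symm

end AuxLemmas

set_option maxHeartbeats 1000000

/-- for a short exact sequence `0 → F → G → H → 0`, `n ≥ 1` and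
`i ≥ 1`, there is a short exact sequence
`0 → ℱ^{i+1}_F(G^{⊗n}) ⊗ F → (ℱ^i_F(G^{⊗n}) ⊗ F) ⊕ (ℱ^{i+1}_F(G^{⊗n}) ⊗ G)
   → ℱ^{i+1}_F(G^{⊗(n+1)}) → 0`,
the first map having components `(inclusion ⊗ id_F, -(id ⊗ₘ f))`, and the second
map being induced by `id ⊗ₘ f` and `inclusion ⊗ id_G` under the identification
`G^{⊗n} ⊗ G = G^{⊗(n+1)}`. -/
theorem FFilt_shortExact_succ (F G H : C) (f : F ⟶ G) (g : G ⟶ H)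
    (w : f ≫ g = 0) (hses : (ShortComplex.mk f g w).ShortExact)
    (n i : ℕ) (hn : 1 ≤ n) (hi : 1 ≤ i) :
    ∃ (u : ((FFilt f n i : C) ⊗ F) ⟶ (FFilt f (n + 1) (i + 1) : C))
      (v : ((FFilt f n (i + 1) : C) ⊗ G) ⟶ (FFilt f (n + 1) (i + 1) : C)),
      u ≫ (FFilt f (n + 1) (i + 1)).arrow = ((FFilt f n i).arrow ⊗ₘ f) ∧
      v ≫ (FFilt f (n + 1) (i + 1)).arrow = ((FFilt f n (i + 1)).arrow ⊗ₘ 𝟙 G) ∧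
      ∃ (w' : biprod.lift
            (Subobject.ofLE (FFilt f n (i + 1)) (FFilt f n i) (FFilt_antitone f n i) ⊗ₘ 𝟙 F)
            (-(𝟙 ((FFilt f n (i + 1) : C)) ⊗ₘ f)) ≫ biprod.desc u v = 0),
        (ShortComplex.mk
          (biprod.lift
            (Subobject.ofLE (FFilt f n (i + 1)) (FFilt f n i) (FFilt_antitone f n i) ⊗ₘ 𝟙 F)
            (-(𝟙 ((FFilt f n (i + 1) : C)) ⊗ₘ f)))
          (biprod.desc u v) w').ShortExact := by
  classical
  haveI hmf : Mono f := hses.mono_f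
  -- Step 1: image of (FFilt f n i).arrow ⊗ₘ f is contained in FFilt f (n+1) (i+1)
  have hXT : imageSubobject ((FFilt f n i).arrow ⊗ₘ f) ≤ FFilt f (n + 1) (i + 1) := by
    have h1 := imageSubobject_finset_sup_arrow_tensor_le
      (Finset.univ.filter fun j : Fin n → Bool => i ≤ wt j)
      (fun j => mixPow F G n j) (fun j => mixMor f n j) f
    refine le_trans h1 (Finset.sup_le fun j hj => ?_)
    have hjw : i ≤ wt j := (Finset.mem_filter.mp hj).2
    have hEq : imageSubobject (mixMor f n j ⊗ₘ f)
        = imageSubobject (mixMor f (n + 1) (Fin.snoc j true)) :=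
      imageSubobject_mixMor_snoc f j true
    rw [hEq]
    show _ ≤ (Finset.univ.filter fun k : Fin (n+1) → Bool => i + 1 ≤ wt k).sup
      fun k => imageSubobject (mixMor f (n+1) k)
    refine Finset.le_sup (f := fun k : Fin (n+1) → Bool => imageSubobject (mixMor f (n+1) k))
      (Finset.mem_filter.mpr ⟨Finset.mem_univ _, ?_⟩)
    rw [wt_snoc]
    simp only [cond_true]
    omega
  have hYT : imageSubobject ((FFilt f n (i + 1)).arrow ⊗ₘ 𝟙 G) ≤ FFilt f (n + 1) (i + 1) := by
    have h1 := imageSubobject_finset_sup_arrow_tensor_le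
      (Finset.univ.filter fun j : Fin n → Bool => i + 1 ≤ wt j)
      (fun j => mixPow F G n j) (fun j => mixMor f n j) (𝟙 G)
    refine le_trans h1 (Finset.sup_le fun j hj => ?_)
    have hjw : i + 1 ≤ wt j := (Finset.mem_filter.mp hj).2
    have hEq : imageSubobject (mixMor f n j ⊗ₘ 𝟙 G)
        = imageSubobject (mixMor f (n + 1) (Fin.snoc j false)) :=
      imageSubobject_mixMor_snoc f j false
    rw [hEq]
    show _ ≤ (Finset.univ.filter fun k : Fin (n+1) → Bool => i + 1 ≤ wt k).sup
      fun k => imageSubobject (mixMor f (n+1) k)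
    refine Finset.le_sup (f := fun k : Fin (n+1) → Bool => imageSubobject (mixMor f (n+1) k))
      (Finset.mem_filter.mpr ⟨Finset.mem_univ _, ?_⟩)
    rw [wt_snoc]
    simp only [cond_false]
    omega
  -- Step 2: the reverse inclusion
  have hTle : FFilt f (n + 1) (i + 1) ≤
      imageSubobject ((FFilt f n i).arrow ⊗ₘ f)
        ⊔ imageSubobject ((FFilt f n (i + 1)).arrow ⊗ₘ 𝟙 G) := by
    show (Finset.univ.filter fun k : Fin (n+1) → Bool => i + 1 ≤ wt k).sup
      (fun k => imageSubobject (mixMor f (n+1) k)) ≤ _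
    refine Finset.sup_le fun k hk => ?_
    have hkw : i + 1 ≤ wt k := (Finset.mem_filter.mp hk).2
    have hwt : wt k = wt (Fin.init k) + (bif k (Fin.last n) then 1 else 0) := by
      conv_lhs => rw [← Fin.snoc_init_self k]
      rw [wt_snoc]
    rw [imageSubobject_mixMor_succ f k]
    cases hb : k (Fin.last n) with
    | true =>
        have hjw : i ≤ wt (Fin.init k) := by
          rw [hb] at hwt; simp only [cond_true] at hwt; omega
        have hle : imageSubobject (mixMor f n (Fin.init k)) ≤ FFilt f n i :=
          Finset.le_sup (f := fun j : Fin n → Bool => imageSubobject (mixMor f n j))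
            (Finset.mem_filter.mpr ⟨Finset.mem_univ _, hjw⟩)
        have hα : (factorThruImageSubobject (mixMor f n (Fin.init k))
            ≫ Subobject.ofLE _ _ hle) ≫ (FFilt f n i).arrow = mixMor f n (Fin.init k) := by
          rw [Category.assoc, Subobject.ofLE_arrow, imageSubobject_arrow_comp]
        have hfac : mixMor f n (Fin.init k) ⊗ₘ boolMor f true
            = ((factorThruImageSubobject (mixMor f n (Fin.init k))
                ≫ Subobject.ofLE _ _ hle) ⊗ₘ 𝟙 F) ≫ ((FFilt f n i).arrow ⊗ₘ f) := by
          rw [tensorHom_comp_tensorHom, hα, Category.id_comp]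
          rfl
        rw [hfac]
        exact le_trans (imageSubobject_comp_le _ _) le_sup_left
    | false =>
        have hjw : i + 1 ≤ wt (Fin.init k) := by
          rw [hb] at hwt; simp only [cond_false] at hwt; omega
        have hle : imageSubobject (mixMor f n (Fin.init k)) ≤ FFilt f n (i + 1) :=
          Finset.le_sup (f := fun j : Fin n → Bool => imageSubobject (mixMor f n j))
            (Finset.mem_filter.mpr ⟨Finset.mem_univ _, hjw⟩)
        have hα : (factorThruImageSubobject (mixMor f n (Fin.init k))
            ≫ Subobject.ofLE _ _ hle) ≫ (FFilt f n (i + 1)).arrow = mixMor f n (Fin.init k) := by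
          rw [Category.assoc, Subobject.ofLE_arrow, imageSubobject_arrow_comp]
        have hfac : mixMor f n (Fin.init k) ⊗ₘ boolMor f false
            = ((factorThruImageSubobject (mixMor f n (Fin.init k))
                ≫ Subobject.ofLE _ _ hle) ⊗ₘ 𝟙 G) ≫ ((FFilt f n (i + 1)).arrow ⊗ₘ 𝟙 G) := by
          rw [tensorHom_comp_tensorHom, hα, Category.id_comp]
          rfl
        rw [hfac]
        exact le_trans (imageSubobject_comp_le _ _) le_sup_right
  -- the two maps
  set u : ((FFilt f n i : C) ⊗ F) ⟶ (FFilt f (n + 1) (i + 1) : C) :=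
    factorThruImageSubobject ((FFilt f n i).arrow ⊗ₘ f) ≫ Subobject.ofLE _ _ hXT with hu_def
  set v : ((FFilt f n (i + 1) : C) ⊗ G) ⟶ (FFilt f (n + 1) (i + 1) : C) :=
    factorThruImageSubobject ((FFilt f n (i + 1)).arrow ⊗ₘ 𝟙 G) ≫ Subobject.ofLE _ _ hYT
    with hv_def
  have hu : u ≫ (FFilt f (n + 1) (i + 1)).arrow = ((FFilt f n i).arrow ⊗ₘ f) := by
    rw [hu_def]
    exact (Category.assoc _ _ _).trans ((congrArg (fun z => factorThruImageSubobject _ ≫ z)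
      (Subobject.ofLE_arrow hXT)).trans (imageSubobject_arrow_comp _))
  have hv : v ≫ (FFilt f (n + 1) (i + 1)).arrow = ((FFilt f n (i + 1)).arrow ⊗ₘ 𝟙 G) := by
    rw [hv_def]
    exact (Category.assoc _ _ _).trans ((congrArg (fun z => factorThruImageSubobject _ ≫ z)
      (Subobject.ofLE_arrow hYT)).trans (imageSubobject_arrow_comp _))
  have hδarrow : biprod.desc u v ≫ (FFilt f (n + 1) (i + 1)).arrow
      = biprod.desc (W := tPow G (n + 1)) ((FFilt f n i).arrow ⊗ₘ f) ((FFilt f n (i + 1)).arrow ⊗ₘ 𝟙 G) := by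
    ext
    · exact (biprod.inl_desc_assoc _ _ _).trans (hu.trans (biprod.inl_desc _ _).symm)
    · exact (biprod.inr_desc_assoc _ _ _).trans (hv.trans (biprod.inr_desc _ _).symm)
  have hκδ : biprod.lift
      (Subobject.ofLE (FFilt f n (i + 1)) (FFilt f n i) (FFilt_antitone f n i) ⊗ₘ 𝟙 F)
      (-(𝟙 ((FFilt f n (i + 1) : C)) ⊗ₘ f)) ≫ biprod.desc u v = 0 := by
    rw [← cancel_mono (FFilt f (n + 1) (i + 1)).arrow, zero_comp, Category.assoc, hδarrow]
    refine biprod.lift_desc.trans ?_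
    have k1 : (Subobject.ofLE (FFilt f n (i + 1)) (FFilt f n i) (FFilt_antitone f n i) ⊗ₘ 𝟙 F)
        ≫ ((FFilt f n i).arrow ⊗ₘ f) = (FFilt f n (i + 1)).arrow ⊗ₘ f := by
      rw [tensorHom_comp_tensorHom, Subobject.ofLE_arrow, Category.id_comp]
    have k2 : (-(𝟙 ((FFilt f n (i + 1) : C)) ⊗ₘ f)) ≫ ((FFilt f n (i + 1)).arrow ⊗ₘ 𝟙 G)
        = -((FFilt f n (i + 1)).arrow ⊗ₘ f) := by
      rw [Preadditive.neg_comp, tensorHom_comp_tensorHom, Category.id_comp, Category.comp_id]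
    exact (congrArg₂ (· + ·) k1 k2).trans (add_neg_cancel _)
  refine ⟨u, v, hu, hv, hκδ, ?_⟩
  -- mono
  haveI hmono1 : Mono (𝟙 ((FFilt f n (i + 1) : C)) ⊗ₘ f) := by
    rw [id_tensorHom]; exact mono_whiskerLeft_aux f _
  haveI : IsIso (-𝟙 ((FFilt f n (i + 1) : C) ⊗ G)) := ⟨⟨-𝟙 _, by simp, by simp⟩⟩
  haveI hmono2 : Mono (-(𝟙 ((FFilt f n (i + 1) : C)) ⊗ₘ f)) := by
    have : -(𝟙 ((FFilt f n (i + 1) : C)) ⊗ₘ f)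
        = (𝟙 ((FFilt f n (i + 1) : C)) ⊗ₘ f) ≫ (-𝟙 _) := by simp
    rw [this]; exact mono_comp _ _
  haveI hκmono : Mono (biprod.lift
      (Subobject.ofLE (FFilt f n (i + 1)) (FFilt f n i) (FFilt_antitone f n i) ⊗ₘ 𝟙 F)
      (-(𝟙 ((FFilt f n (i + 1) : C)) ⊗ₘ f))) :=
    mono_of_mono_fac (biprod.lift_snd _ _)
  -- epi
  have himg : imageSubobject (biprod.desc u v ≫ (FFilt f (n + 1) (i + 1)).arrow)
      = FFilt f (n + 1) (i + 1) := by
    rw [hδarrow]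
    exact (imageSubobject_biprod_desc _ _).trans (le_antisymm (sup_le hXT hYT) hTle)
  haveI hδepi : Epi (biprod.desc u v) := by
    have heq : biprod.desc u v
        = factorThruImageSubobject (biprod.desc u v ≫ (FFilt f (n + 1) (i + 1)).arrow)
          ≫ Subobject.ofLE _ _ himg.le := by
      rw [← cancel_mono (FFilt f (n + 1) (i + 1)).arrow, Category.assoc, Subobject.ofLE_arrow,
        imageSubobject_arrow_comp]
    rw [heq]
    haveI : IsIso (Subobject.ofLE _ _ himg.le) :=
      (Subobject.isoOfEq _ _ himg).isIso_hom
    exact epi_comp _ _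
  -- the kernel property
  have hkerlift : ∀ (W' : C) (r : W' ⟶ (FFilt f n (i + 1) : C) ⊗ G),
      r ≫ ((FFilt f n (i + 1) : C) ◁ g) = 0 →
      ∃ l : W' ⟶ (FFilt f n (i + 1) : C) ⊗ F, l ≫ ((FFilt f n (i + 1) : C) ◁ f) = r := by
    intro W' r hr
    have hk := hses.exact.fIsKernel
    have hk2 := KernelFork.mapIsLimit _ hk (tensorLeft (FFilt f n (i + 1) : C))
    obtain ⟨l, hl⟩ := KernelFork.IsLimit.lift' hk2 r hr
    exact ⟨l, hl⟩
  have hlim : IsLimit (KernelFork.ofι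
      (biprod.lift (Subobject.ofLE (FFilt f n (i + 1)) (FFilt f n i) (FFilt_antitone f n i) ⊗ₘ 𝟙 F)
        (-(𝟙 ((FFilt f n (i + 1) : C)) ⊗ₘ f)))
      hκδ) := by
    refine KernelFork.IsLimit.ofι' _ _ (fun {W'} t ht => ?_)
    have h0 : (t ≫ biprod.fst) ≫ ((FFilt f n i).arrow ⊗ₘ f)
        + (t ≫ biprod.snd) ≫ ((FFilt f n (i + 1)).arrow ⊗ₘ 𝟙 G) = 0 := by
      have := congrArg (fun z => z ≫ (FFilt f (n + 1) (i + 1)).arrow) ht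
      simp only [Category.assoc, zero_comp] at this
      rw [hδarrow] at this
      have e := (congrArg (fun z => t ≫ z) (biprod_desc_eq_sum ((FFilt f n i).arrow ⊗ₘ f)
        ((FFilt f n (i + 1)).arrow ⊗ₘ 𝟙 G))).symm.trans this
      simp only [Preadditive.comp_add, Category.assoc] at e ⊢
      exact e
    have hBH : Mono ((FFilt f n (i + 1)).arrow ▷ H) :=
      mono_whiskerRight_aux _ _
    have e1 : ((FFilt f n (i + 1) : C) ◁ g) ≫ ((FFilt f n (i + 1)).arrow ▷ H)
        = ((FFilt f n (i + 1)).arrow ⊗ₘ 𝟙 G) ≫ ((tPow G n) ◁ g) := by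
      rw [tensorHom_id]
      rw [← whisker_exchange]
    have e2 : (t ≫ biprod.snd) ≫ ((FFilt f n (i + 1)).arrow ⊗ₘ 𝟙 G)
        = -((t ≫ biprod.fst) ≫ ((FFilt f n i).arrow ⊗ₘ f)) := by
      rw [eq_neg_iff_add_eq_zero, add_comm]
      exact h0
    have e3 : ((FFilt f n i).arrow ⊗ₘ f) ≫ ((tPow G n) ◁ g) = 0 := by
      rw [MonoidalCategory.tensorHom_def, Category.assoc, ← MonoidalCategory.whiskerLeft_comp, w]
      simp
    have hrg : (t ≫ biprod.snd) ≫ ((FFilt f n (i + 1) : C) ◁ g) = 0 := by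
      have q1 : ((t ≫ biprod.snd) ≫ ((FFilt f n (i + 1)).arrow ⊗ₘ 𝟙 G))
          ≫ ((tPow G n) ◁ g) = 0 := by
        rw [e2, Preadditive.neg_comp, Category.assoc, e3, comp_zero, neg_zero]
      have q2 : ((t ≫ biprod.snd) ≫ ((FFilt f n (i + 1) : C) ◁ g))
          ≫ ((FFilt f n (i + 1)).arrow ▷ H) = 0 := by
        rw [Category.assoc, e1, ← Category.assoc]
        exact q1
      exact zero_of_comp_mono _ q2
    have hex := hkerlift W' (t ≫ biprod.snd) hrg
    set l₀ := hex.choose with hl₀def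
    have hl₀ : l₀ ≫ ((FFilt f n (i + 1) : C) ◁ f) = t ≫ biprod.snd := hex.choose_spec
    refine ⟨-l₀, ?_⟩
    have hmAf : Mono ((FFilt f n i).arrow ⊗ₘ f) := mono_tensor_aux _ _
    have hl1 : (-l₀) ≫ (Subobject.ofLE (FFilt f n (i + 1)) (FFilt f n i)
        (FFilt_antitone f n i) ⊗ₘ 𝟙 F) = t ≫ biprod.fst := by
      rw [← cancel_mono ((FFilt f n i).arrow ⊗ₘ f), Category.assoc, tensorHom_comp_tensorHom,
        Subobject.ofLE_arrow, Category.id_comp]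
      have e4 : (FFilt f n (i + 1)).arrow ⊗ₘ f
          = ((FFilt f n (i + 1) : C) ◁ f) ≫ ((FFilt f n (i + 1)).arrow ⊗ₘ 𝟙 G) := by
        rw [tensorHom_id, whisker_exchange, MonoidalCategory.tensorHom_def]
      rw [e4, Preadditive.neg_comp, reassoc_of% hl₀, ← Category.assoc]
      exact neg_eq_of_add_eq_zero_left h0
    have hl2 : (-l₀) ≫ (-(𝟙 ((FFilt f n (i + 1) : C)) ⊗ₘ f)) = t ≫ biprod.snd := by
      rw [Preadditive.comp_neg, Preadditive.neg_comp, neg_neg, id_tensorHom, hl₀]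
    apply biprod.hom_ext
    · rw [Category.assoc, biprod.lift_fst, hl1]
    · rw [Category.assoc, biprod.lift_snd, hl2]
  exact { exact := ShortComplex.exact_of_f_is_kernel _ hlim,
          mono_f := hκmono, epi_g := hδepi }


end
end
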